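/- Let G be a locally finite simple graph and {x,y} an edge not contained in any triangle or 4-cycle, with d_x ≥ 3 and d_y ≥ 3. Then κ_LLY(x,y) ≤ 0. -/

import Mathlib

open SimpleGraph

attribute [local instance] Classical.propDecidable

variable {V : Type*}

/-- Normalized graph Laplacian applied to an integer-valued function. -/
noncomputable def lap (G : SimpleGraph V) [∀ v : V, Fintype (G.neighborSet v)]
    (f : V → ℤ) (v : V) : ℝ :=
  (∑ w ∈ G.neighborFinset v, ((f w : ℝ) - (f v : ℝ))) / (G.degree v : ℝ)

/-- Lin-Lu-Yau curvature via the Laplacian (Münch–Wojciechowski) formulation: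
the infimum of `Δf(x) − Δf(y)` over integer-valued functions that are
1-Lipschitz on `N[x] ∪ N[y]` and satisfy `f(y) − f(x) = 1`. -/
noncomputable def kappaLLY (G : SimpleGraph V) [∀ v : V, Fintype (G.neighborSet v)]
    (x y : V) : ℝ :=
  sInf { r : ℝ | ∃ f : V → ℤ,
    (∀ u ∈ insert x (G.neighborSet x) ∪ insert y (G.neighborSet y),
      ∀ v ∈ insert x (G.neighborSet x) ∪ insert y (G.neighborSet y),
        |f u - f v| ≤ (G.dist u v : ℤ)) ∧
    f y - f x = 1 ∧ r = lap G f x - lap G f y }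

/-- The edge `{p,q}` is contained in no triangle and no 4-cycle. -/
def noC3C4 (G : SimpleGraph V) (p q : V) : Prop :=
  (∀ z : V, ¬ (G.Adj p z ∧ G.Adj z q)) ∧
  (∀ u v : V, G.Adj p u → G.Adj u v → G.Adj v q → u = q ∨ v = p)

/-- The wheel graph on `Fin n`: hub `0` joined to the rim cycle `1, …, n-1`. -/
noncomputable def wheel (n : ℕ) : SimpleGraph (Fin n) :=
  SimpleGraph.fromRel (fun a b =>
    a.val = 0 ∨ b.val = a.val + 1 ∨ (a.val = n - 1 ∧ b.val = 1))

/-- `u` and `v` lie in the same component of `T − x`. -/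
def SameComp (T : SimpleGraph V) (x u v : V) : Prop :=
  ∃ w : T.Walk u v, x ∉ w.support

/-- The generalized Halin graph obtained from the tree `T` by joining its
leaves, listed in the cyclic order `σ`, by a cycle. -/
noncomputable def halinGraph (T : SimpleGraph V) {ℓ : ℕ} (σ : ZMod ℓ → V) : SimpleGraph V :=
  T ⊔ SimpleGraph.fromRel (fun a b => ∃ i : ZMod ℓ, a = σ i ∧ b = σ (i + 1))

/-- Distance from a vertex to a set of vertices. -/
noncomputable def distToSet (G : SimpleGraph V) (S : Set V) (z : V) : ℕ :=
  sInf {d : ℕ | ∃ s ∈ S, d = G.dist z s}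


theorem stmt2 {V : Type*} (G : SimpleGraph V)
    [∀ v : V, Fintype (G.neighborSet v)]
    (x y : V) (hxy : G.Adj x y) (h : noC3C4 G x y)
    (hdx : 3 ≤ G.degree x) (hdy : 3 ≤ G.degree y) :
    kappaLLY G x y ≤ 0 := by
  classical
  have hxny : x ≠ y := hxy.ne
  set f : V → ℤ := fun v => if v = x then 0 else if v = y then 1 else
      if G.Adj x v then -1 else if G.Adj y v then 1 else 0 with hf
  have hfx : f x = 0 := by simp [hf]
  have hfy : f y = 1 := by simp [hf, hxny.symm]
  have hfnx : ∀ w, G.Adj x w → w ≠ y → f w = -1 := by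
    intro w hw hwy
    have hwx : w ≠ x := fun e => G.loopless.irrefl x (e ▸ hw)
    simp [hf, hwx, hwy, hw]
  have hfny : ∀ w, G.Adj y w → w ≠ x → f w = 1 := by
    intro w hw hwx
    have hwy : w ≠ y := fun e => G.loopless.irrefl y (e ▸ hw)
    have hnadj : ¬ G.Adj x w := fun ha => h.1 w ⟨ha, hw.symm⟩
    simp [hf, hwx, hwy, hnadj, hw]
  have hrange : ∀ v, -1 ≤ f v ∧ f v ≤ 1 := by
    intro v; simp only [hf]; split_ifs <;> omega
  have hchar1 : ∀ u, f u = -1 → u ≠ x ∧ u ≠ y ∧ G.Adj x u := by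
    intro u hu; simp only [hf] at hu
    split_ifs at hu with h1 h2 h3 h4 <;> first | omega | exact ⟨h1, h2, h3⟩
  have hchar2 : ∀ u, f u = 1 → u = y ∨ (u ≠ x ∧ ¬ G.Adj x u ∧ G.Adj y u) := by
    intro u hu; simp only [hf] at hu
    split_ifs at hu with h1 h2 h3 h4 <;>
      first | omega | exact Or.inl h2 | exact Or.inr ⟨h1, h3, h4⟩
  have hnadj : ∀ a b, f a = -1 → f b = 1 → ¬ G.Adj a b := by
    intro a b ha hb hab
    obtain ⟨hax, hay, hxa⟩ := hchar1 a ha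
    rcases hchar2 b hb with rfl | ⟨hbx, _, hyb⟩
    · exact h.1 a ⟨hxa, hab⟩
    · rcases h.2 a b hxa hab hyb.symm with h' | h'
      · exact hay h'
      · exact hbx h'
  have hreach : ∀ u, ((u = x ∨ G.Adj x u) ∨ u = y ∨ G.Adj y u) → G.Reachable x u := by
    rintro u ((rfl | h1) | rfl | h1)
    · exact Reachable.refl _
    · exact h1.reachable
    · exact hxy.reachable
    · exact hxy.reachable.trans h1.reachable
  -- Lipschitz property
  have hlip : ∀ u ∈ insert x (G.neighborSet x) ∪ insert y (G.neighborSet y),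
      ∀ v ∈ insert x (G.neighborSet x) ∪ insert y (G.neighborSet y),
        |f u - f v| ≤ (G.dist u v : ℤ) := by
    intro u hu v hv
    simp only [Set.mem_union, Set.mem_insert_iff, SimpleGraph.mem_neighborSet] at hu hv
    by_cases hfe : f u = f v
    · simp [hfe]
    have hne : u ≠ v := fun e => hfe (by rw [e])
    have hr : G.Reachable u v := (hreach u hu).symm.trans (hreach v hv)
    have h1 : 1 ≤ G.dist u v := hr.pos_dist_of_ne hne
    by_cases h2 : |f u - f v| ≤ 1
    · exact le_trans h2 (by exact_mod_cast h1)
    -- gap 2 case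
    have hu' := hrange u
    have hv' := hrange v
    have hcases : (f u = -1 ∧ f v = 1) ∨ (f u = 1 ∧ f v = -1) := by
      rcases abs_cases (f u - f v) with ⟨he, _⟩ | ⟨he, _⟩ <;> omega
    have hnuv : ¬ G.Adj u v := by
      rcases hcases with ⟨ha, hb⟩ | ⟨ha, hb⟩
      · exact hnadj u v ha hb
      · exact fun hA => hnadj v u hb ha hA.symm
    have hd2 : 2 ≤ G.dist u v := by
      have hne1 : G.dist u v ≠ 1 := fun e => hnuv (dist_eq_one_iff_adj.mp e)
      omega
    have hle2 : |f u - f v| ≤ 2 := by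
      rcases abs_cases (f u - f v) with ⟨he, _⟩ | ⟨he, _⟩ <;> omega
    exact le_trans hle2 (by exact_mod_cast hd2)
  -- Laplacian at x
  have hy_mem : y ∈ G.neighborFinset x := by rwa [SimpleGraph.mem_neighborFinset]
  have hx_mem : x ∈ G.neighborFinset y := by
    rw [SimpleGraph.mem_neighborFinset]; exact hxy.symm
  have hsumx : ∑ w ∈ G.neighborFinset x, ((f w : ℝ) - (f x : ℝ))
      = 2 - (G.degree x : ℝ) := by
    rw [← Finset.sum_erase_add _ _ hy_mem]
    have hconst : ∀ w ∈ (G.neighborFinset x).erase y,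
        ((f w : ℝ) - (f x : ℝ)) = -1 := by
      intro w hw
      rw [Finset.mem_erase, SimpleGraph.mem_neighborFinset] at hw
      rw [hfnx w hw.2 hw.1, hfx]; norm_num
    rw [Finset.sum_congr rfl hconst, Finset.sum_const,
      Finset.card_erase_of_mem hy_mem, hfy, hfx]
    have : (G.degree x : ℝ) = ((G.neighborFinset x).card : ℝ) := by
      rw [SimpleGraph.card_neighborFinset_eq_degree]
    have hcard : 1 ≤ (G.neighborFinset x).card := Finset.card_pos.mpr ⟨y, hy_mem⟩
    rw [this, nsmul_eq_mul, Nat.cast_sub hcard]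
    push_cast
    ring
  have hsumy : ∑ w ∈ G.neighborFinset y, ((f w : ℝ) - (f y : ℝ)) = -1 := by
    rw [← Finset.sum_erase_add _ _ hx_mem]
    have hconst : ∀ w ∈ (G.neighborFinset y).erase x,
        ((f w : ℝ) - (f y : ℝ)) = 0 := by
      intro w hw
      rw [Finset.mem_erase, SimpleGraph.mem_neighborFinset] at hw
      rw [hfny w hw.2 hw.1, hfy]; norm_num
    rw [Finset.sum_congr rfl hconst, Finset.sum_const, hfx, hfy]
    norm_num
  have hdx0 : (0:ℝ) < (G.degree x : ℝ) := by
    have : 0 < G.degree x := by omega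
    exact_mod_cast this
  have hdy0 : (0:ℝ) < (G.degree y : ℝ) := by
    have : 0 < G.degree y := by omega
    exact_mod_cast this
  have hdx3 : (3:ℝ) ≤ (G.degree x : ℝ) := by exact_mod_cast hdx
  have hdy3 : (3:ℝ) ≤ (G.degree y : ℝ) := by exact_mod_cast hdy
  have hrle : lap G f x - lap G f y ≤ 0 := by
    rw [lap, lap, hsumx, hsumy]
    rw [div_sub_div _ _ (ne_of_gt hdx0) (ne_of_gt hdy0)]
    apply div_nonpos_of_nonpos_of_nonneg
    · nlinarith [mul_nonneg (by linarith : (0:ℝ) ≤ (G.degree x : ℝ) - 2)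
        (by linarith : (0:ℝ) ≤ (G.degree y : ℝ) - 3)]
    · positivity
  have hrmem : lap G f x - lap G f y ∈ { r : ℝ | ∃ f : V → ℤ,
      (∀ u ∈ insert x (G.neighborSet x) ∪ insert y (G.neighborSet y),
        ∀ v ∈ insert x (G.neighborSet x) ∪ insert y (G.neighborSet y),
          |f u - f v| ≤ (G.dist u v : ℤ)) ∧
      f y - f x = 1 ∧ r = lap G f x - lap G f y } :=
    ⟨f, hlip, by rw [hfy, hfx]; norm_num, rfl⟩
  rw [kappaLLY]
  by_cases hb : BddBelow { r : ℝ | ∃ f : V → ℤ,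
      (∀ u ∈ insert x (G.neighborSet x) ∪ insert y (G.neighborSet y),
        ∀ v ∈ insert x (G.neighborSet x) ∪ insert y (G.neighborSet y),
          |f u - f v| ≤ (G.dist u v : ℤ)) ∧
      f y - f x = 1 ∧ r = lap G f x - lap G f y }
  · exact le_trans (csInf_le hb hrmem) hrle
  · rw [Real.sInf_of_not_bddBelow hb]
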